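/- arXiv:2103.01012 — 5 statements merged into one kernel-verified Lean document; each statement's English description precedes it below -/
import Mathlib

section
/- If a shift space X is unambiguously coded by C (i.e., C is a strong code and the language of X equals the set of factors of C*), then C is a circular code. -/
variable {A : Type*}

/-- `C*`: `w` is a concatenation of words of `C`. -/
def InStar (C : Set (List A)) (w : List A) : Prop :=
  ∃ l : List (List A), (∀ u ∈ l, u ∈ C) ∧ l.flatten = w

/-- The word read in `x` at positions `i, i+1, …, i+l-1`. -/
def window (x : ℤ → A) (i : ℤ) (l : ℕ) : List A :=
  List.ofFn (fun j : Fin l => x (i + (j : ℕ)))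

/-- The language of a set of bi-infinite sequences: its finite factors. -/
def Lang (X : Set (ℤ → A)) : Set (List A) :=
  {w | ∃ x ∈ X, ∃ i : ℤ, w = window x i w.length}

/-- The set of factors of words of `C*`. -/
def FacStar (C : Set (List A)) : Set (List A) :=
  {w | ∃ z : List A, InStar C z ∧ w <:+: z}

/-- The shift map on bi-infinite sequences. -/
def shift (x : ℤ → A) : ℤ → A := fun n => x (n + 1)

/-- A factorization (with phase `k`) of the bi-infinite sequence `x` into words
of `C`. -/
def IsBiFactorization (C : Set (List A)) (x : ℤ → A)
    (c : ℤ → List A) (k : ℕ) : Prop :=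
  (∀ n, c n ∈ C) ∧ k < (c 0).length ∧
  ∃ p : ℤ → ℤ, p 0 = -(k : ℤ) ∧ (∀ n, p (n + 1) = p n + (c n).length) ∧
    ∀ (n : ℤ) (i : Fin (c n).length), x (p n + (i : ℕ)) = (c n).get i

def PS (L : List (List A)) (r : ℕ) : ℕ := ((L.take r).flatten).length

lemma PS_zero (L : List (List A)) : PS L 0 = 0 := rfl

-- div/mod helpers
lemma divmod_shift {len m : ℤ} (hlen : 0 < len) :
    (m % len + 1 < len → (m + 1) % len = m % len + 1 ∧ (m + 1) / len = m / len) ∧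
    (m % len + 1 = len → (m + 1) % len = 0 ∧ (m + 1) / len = m / len + 1) := by
  have hne : len ≠ 0 := hlen.ne'
  have h0 : 0 ≤ m % len := Int.emod_nonneg m hne
  have key : m + 1 = (m % len + 1) + len * (m / len) := by
    have := Int.mul_ediv_add_emod m len; linarith
  constructor
  · intro h
    constructor
    · rw [key, Int.add_mul_emod_self_left, Int.emod_eq_of_lt (by linarith) h]
    · rw [key, Int.add_mul_ediv_left _ _ hne, Int.ediv_eq_zero_of_lt (by linarith) h, zero_add]
  · intro h
    constructor
    · rw [key, Int.add_mul_emod_self_left, h, Int.emod_self]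
    · rw [key, Int.add_mul_ediv_left _ _ hne, h, Int.ediv_self hne, add_comm]

lemma divmod_of {len a r : ℤ} (hlen : 0 < len) (h0 : 0 ≤ r) (h1 : r < len) :
    (a * len + r) % len = r ∧ (a * len + r) / len = a := by
  have hne : len ≠ 0 := hlen.ne'
  have e : a * len + r = r + len * a := by ring
  constructor
  · rw [e, Int.add_mul_emod_self_left, Int.emod_eq_of_lt h0 h1]
  · rw [e, Int.add_mul_ediv_left _ _ hne, Int.ediv_eq_zero_of_lt h0 h1, zero_add]

/-- block-start positions -/
def FF (L : List (List A)) (m : ℤ) : ℤ :=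
  (m / (L.length : ℤ)) * (L.flatten.length : ℤ) + (PS L ((m % (L.length : ℤ)).toNat) : ℤ)

lemma FF_zero (L : List (List A)) : FF L 0 = 0 := by
  simp [FF, PS]

section
variable {L : List (List A)} (hL0 : L ≠ [])

lemma lenL_pos (hL0 : L ≠ []) : 0 < L.length := List.length_pos_iff.2 hL0

lemma PS_succ (L : List (List A)) {r : ℕ} (h : r < L.length) :
    PS L (r + 1) = PS L r + (L.getD r []).length := by
  unfold PS
  rw [List.take_succ, List.flatten_append, List.length_append, List.getD_eq_getElem L [] h]
  simp [List.getElem?_eq_getElem h]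

lemma PS_le (L : List (List A)) (n : ℕ) : PS L n ≤ L.flatten.length := by
  conv_rhs => rw [← List.take_append_drop n L]
  rw [List.flatten_append, List.length_append]
  exact Nat.le_add_right _ _

lemma PS_len (L : List (List A)) : PS L L.length = L.flatten.length := by
  unfold PS; rw [List.take_length]

lemma FF_succ (hL0 : L ≠ []) (m : ℤ) :
    FF L (m + 1) = FF L m + ((L.getD ((m % (L.length : ℤ)).toNat) []).length : ℤ) := by
  have hlen : (0:ℤ) < L.length := by exact_mod_cast lenL_pos hL0
  have h0 : 0 ≤ m % (L.length:ℤ) := Int.emod_nonneg m hlen.ne'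
  have h1 : m % (L.length:ℤ) < L.length := Int.emod_lt_of_pos m hlen
  set r : ℕ := (m % (L.length:ℤ)).toNat with hr
  have hrl : r < L.length := by omega
  have hrc : (r : ℤ) = m % (L.length:ℤ) := by omega
  rcases lt_or_eq_of_le (by omega : m % (L.length:ℤ) + 1 ≤ L.length) with h | h
  · obtain ⟨e1, e2⟩ := (divmod_shift hlen).1 h
    unfold FF
    rw [e1, e2]
    have : (m % (L.length:ℤ) + 1).toNat = r + 1 := by omega
    rw [this, PS_succ L hrl]
    push_cast; ring
  · obtain ⟨e1, e2⟩ := (divmod_shift hlen).2 h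
    unfold FF
    rw [e1, e2]
    have hr1 : r + 1 = L.length := by omega
    have : PS L r + (L.getD r []).length = L.flatten.length := by
      rw [← PS_succ L hrl, hr1, PS_len]
    rw [← hr]
    have hz : PS L (Int.toNat 0) = 0 := by simp [PS]
    rw [Int.toNat_zero] at hz ⊢
    rw [hz]
    have h2 : ((PS L r : ℤ)) + ((L.getD r []).length : ℤ) = (L.flatten.length : ℤ) := by
      exact_mod_cast congrArg (Nat.cast (R := ℤ)) this
    push_cast
    linarith [h2]

end

/-- find block containing t -/
lemma find_block (L : List (List A)) :
    ∀ n, n ≤ L.length → ∀ t : ℕ, t < PS L n → ∃ r, r < n ∧ PS L r ≤ t ∧ t < PS L (r + 1) := by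
  intro n
  induction n with
  | zero => intro _ t ht; simp [PS] at ht
  | succ n ih =>
    intro hn t ht
    by_cases h : t < PS L n
    · obtain ⟨r, h1, h2, h3⟩ := ih (by omega) t h
      exact ⟨r, by omega, h2, h3⟩
    · exact ⟨n, by omega, by omega, ht⟩

lemma p_unique (p q g : ℤ → ℤ) (h0 : p 0 = q 0)
    (hp : ∀ n, p (n + 1) = p n + g n) (hq : ∀ n, q (n + 1) = q n + g n) : p = q := by
  funext n
  induction n using Int.induction_on with
  | zero => exact h0
  | succ i ih => rw [hp, hq, ih]
  | pred i ih =>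
    have h1 := hp (-(i:ℤ) - 1); have h2 := hq (-(i:ℤ) - 1)
    rw [show (-(i:ℤ) - 1 + 1) = -(i:ℤ) by ring] at h1 h2
    omega

lemma PS_lt {L : List (List A)} (hent : ∀ a ∈ L, a ≠ []) {r : ℕ} (hr : r < L.length) :
    PS L r < L.flatten.length := by
  have h1 := PS_succ L hr
  have h2 := PS_le L (r + 1)
  have h3 : (L.getD r []).length ≠ 0 := by
    rw [List.getD_eq_getElem L [] hr]
    simpa using hent _ (List.getElem_mem hr)
  omega

lemma flatten_pos {L : List (List A)} (hL0 : L ≠ []) (hent : ∀ a ∈ L, a ≠ []) :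
    0 < L.flatten.length := by
  have := PS_lt hent (List.length_pos_iff.2 hL0)
  omega

lemma FF_mem_PS {L : List (List A)} (hL0 : L ≠ []) (hent : ∀ a ∈ L, a ≠ []) (m : ℤ)
    (h0 : 0 ≤ FF L m) (h1 : FF L m < (L.flatten.length : ℤ)) :
    ∃ r : ℕ, r < L.length ∧ (PS L r : ℤ) = FF L m := by
  have hlen : (0:ℤ) < L.length := by exact_mod_cast List.length_pos_iff.2 hL0
  have hW : (0:ℤ) < L.flatten.length := by exact_mod_cast flatten_pos hL0 hent
  have hm0 : 0 ≤ m % (L.length:ℤ) := Int.emod_nonneg m hlen.ne'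
  have hm1 : m % (L.length:ℤ) < L.length := Int.emod_lt_of_pos m hlen
  set r : ℕ := (m % (L.length:ℤ)).toNat with hr
  have hrl : r < L.length := by omega
  have hPSr : (PS L r : ℤ) < L.flatten.length := by exact_mod_cast PS_lt hent hrl
  have hPS0 : (0:ℤ) ≤ PS L r := by positivity
  set q : ℤ := m / (L.length:ℤ) with hq
  have hFF : FF L m = q * (L.flatten.length:ℤ) + PS L r := rfl
  refine ⟨r, hrl, ?_⟩
  rcases lt_trichotomy q 0 with h | h | h
  · exfalso
    have : q * (L.flatten.length:ℤ) ≤ (-1) * L.flatten.length :=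
      mul_le_mul_of_nonneg_right (by omega) hW.le
    rw [hFF] at h0; linarith
  · rw [hFF, h]; ring
  · exfalso
    have : (1:ℤ) * L.flatten.length ≤ q * L.flatten.length :=
      mul_le_mul_of_nonneg_right (by omega) hW.le
    rw [hFF] at h1; linarith

lemma getElem_flatten_PS (L : List (List A)) {r i : ℕ} (hr : r < L.length)
    (hi : i < (L.getD r []).length) (hidx : PS L r + i < L.flatten.length) :
    L.flatten[PS L r + i] = (L.getD r [])[i] := by
  induction L generalizing r with
  | nil => simp at hr
  | cons a L ih =>
    cases r with
    | zero =>
      simp only [PS_zero, Nat.zero_add, List.getD_cons_zero] at hi ⊢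
      simp only [List.flatten_cons]
      rw [List.getElem_append_left hi]
    | succ r =>
      have hr' : r < L.length := by simpa using hr
      have hPS : PS (a :: L) (r+1) = a.length + PS L r := by
        unfold PS; simp [List.take_succ_cons]
      simp only [List.getD_cons_succ] at hi ⊢
      simp only [List.flatten_cons] at hidx ⊢
      have hidx2 : PS L r + i < L.flatten.length := by
        rw [hPS] at hidx; rw [List.length_append] at hidx; omega
      simp only [hPS]
      simp only [Nat.add_assoc]
      rw [List.getElem_append_right (by omega)]
      simpa using ih hr' hi hidx2


lemma instar_nil (C : Set (List A)) : InStar C [] := ⟨[], by simp, rfl⟩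

lemma instar_append {C : Set (List A)} {a b : List A} (ha : InStar C a) (hb : InStar C b) :
    InStar C (a ++ b) := by
  obtain ⟨l1, h1, e1⟩ := ha; obtain ⟨l2, h2, e2⟩ := hb
  exact ⟨l1 ++ l2, by intro u hu; rcases List.mem_append.1 hu with h | h; exacts [h1 u h, h2 u h],
    by rw [List.flatten_append, e1, e2]⟩

/-- the periodic point -/
def per (w : List A) (hw : w ≠ []) : ℤ → A := fun n =>
  w[(n % (w.length : ℤ)).toNat]'(by
    have hlen : 0 < w.length := List.length_pos_iff.2 hw
    have h0 : 0 ≤ n % (w.length:ℤ) := Int.emod_nonneg n (by exact_mod_cast hlen.ne')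
    have h1 : n % (w.length:ℤ) < w.length := Int.emod_lt_of_pos n (by exact_mod_cast hlen)
    omega)

lemma instar_flatten_replicate {C : Set (List A)} {w : List A} (hw : InStar C w) (M : ℕ) :
    InStar C (List.replicate M w).flatten := by
  induction M with
  | zero => exact instar_nil C
  | succ M ih =>
    rw [List.replicate_succ, List.flatten_cons]
    exact instar_append hw ih

lemma length_flatten_replicate (w : List A) (M : ℕ) :
    ((List.replicate M w).flatten).length = M * w.length := by
  induction M with
  | zero => simp
  | succ M ih => rw [List.replicate_succ, List.flatten_cons, List.length_append, ih]; ring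

lemma getElem_flatten_replicate (w : List A) (hw : w ≠ []) (M : ℕ) (j : ℕ)
    (hj : j < ((List.replicate M w).flatten).length)
    (hj2 : j % w.length < w.length) :
    ((List.replicate M w).flatten)[j] = w[j % w.length] := by
  induction M generalizing j with
  | zero => simp at hj
  | succ M ih =>
    rw [length_flatten_replicate] at hj
    simp only [List.replicate_succ, List.flatten_cons]
    by_cases h : j < w.length
    · rw [List.getElem_append_left h]
      congr 1
      exact (Nat.mod_eq_of_lt h).symm
    · push_neg at h
      rw [List.getElem_append_right h]
      have hwl : 0 < w.length := List.length_pos_iff.2 hw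
      have hsub : j - w.length < ((List.replicate M w).flatten).length := by
        rw [length_flatten_replicate]
        have e : (M+1) * w.length = M * w.length + w.length := by ring
        omega
      rw [ih _ hsub (Nat.mod_lt _ hwl)]
      congr 1
      conv_rhs => rw [show j = w.length + (j - w.length) by omega]
      rw [Nat.add_mod_left]

/-- every window of the periodic point is a factor of a power of w -/
lemma window_per_infix {w : List A} (hw : w ≠ []) (i : ℤ) (l : ℕ) :
    window (per w hw) i l <:+: (List.replicate (((i % (w.length:ℤ)).toNat + l) + 1) w).flatten := by
  have hwl : 0 < w.length := List.length_pos_iff.2 hw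
  set r : ℕ := (i % (w.length:ℤ)).toNat with hrdef
  have h0 : 0 ≤ i % (w.length:ℤ) := Int.emod_nonneg i (by exact_mod_cast hwl.ne')
  have h1 : i % (w.length:ℤ) < w.length := Int.emod_lt_of_pos i (by exact_mod_cast hwl)
  set M : ℕ := r + l + 1 with hM
  set z : List A := (List.replicate M w).flatten with hz
  have hzlen : z.length = M * w.length := length_flatten_replicate w M
  have hrl : r + l ≤ z.length := by
    rw [hzlen]
    calc r + l ≤ M := by omega
    _ ≤ M * w.length := Nat.le_mul_of_pos_right M hwl
  have heq : window (per w hw) i l = (z.drop r).take l := by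
    apply List.ext_getElem
    · simp only [window, List.length_ofFn, List.length_take, List.length_drop]
      omega
    · intro j hj1 hj2
      simp only [window, List.length_ofFn] at hj1
      simp only [window, List.getElem_ofFn, List.getElem_take, List.getElem_drop]
      have hidx : r + j < z.length := by omega
      rw [getElem_flatten_replicate w hw M (r + j) hidx (Nat.mod_lt _ hwl)]
      show w[((i + (j:ℕ)) % (w.length : ℤ)).toNat]'_ = _
      congr 1
      have : (i + (j:ℕ)) % (w.length:ℤ) = ((r:ℤ) + (j:ℕ)) % (w.length:ℤ) := by
        conv_lhs => rw [show i = (i % (w.length:ℤ)) + (w.length:ℤ) * (i / (w.length:ℤ)) by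
          rw [Int.emod_add_mul_ediv]]
        rw [show (i % (w.length:ℤ)) + (w.length:ℤ) * (i / w.length) + (j:ℕ)
            = ((i % (w.length:ℤ)) + (j:ℕ)) + (w.length:ℤ) * (i / w.length) by ring]
        rw [Int.add_mul_emod_self_left]
        congr 1
        omega
      rw [this]
      have : ((r:ℤ) + (j:ℕ)) % (w.length:ℤ) = (((r + j) % w.length : ℕ) : ℤ) := by
        push_cast
        rfl
      rw [this]
      omega
  rw [heq]
  exact (List.take_prefix l (z.drop r)).isInfix.trans (List.drop_suffix r z).isInfix

lemma shift_translate {X : Set (ℤ → A)} (hXinv : shift '' X = X) (t : ℤ) {y : ℤ → A}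
    (hy : y ∈ X) : (fun m => y (m + t)) ∈ X := by
  induction t using Int.induction_on with
  | zero => simpa using hy
  | succ i ih =>
    have : (fun m => y (m + ((i:ℤ) + 1))) = shift (fun m => y (m + i)) := by
      funext m; simp [shift]; ring_nf
    rw [this, ← hXinv]
    exact Set.mem_image_of_mem _ ih
  | pred i ih =>
    have hmem : (fun m => y (m + -(i:ℤ))) ∈ shift '' X := by rw [hXinv]; exact ih
    obtain ⟨z, hz, hze⟩ := hmem
    have : z = fun m => y (m + (-(i:ℤ) - 1)) := by
      funext m
      have := congrFun hze (m - 1)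
      simp [shift] at this
      rw [this]
      congr 1; ring
    rw [← this]; exact hz

lemma mem_of_windows [Fintype A] [TopologicalSpace A] [DiscreteTopology A]
    {X : Set (ℤ → A)} (hXcl : IsClosed X) (hXinv : shift '' X = X) (x : ℤ → A)
    (h : ∀ n : ℕ, window x (-(n:ℤ)) (2 * n + 1) ∈ Lang X) : x ∈ X := by
  rw [← hXcl.closure_eq]
  rw [mem_closure_iff_nhds]
  intro t ht
  rw [nhds_pi, Filter.mem_pi] at ht
  obtain ⟨I, hIfin, T, hT, hsub⟩ := ht
  -- bound on I
  have hTx : ∀ i, x i ∈ T i := by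
    intro i
    have h2 := hT i
    rw [nhds_discrete] at h2
    exact Filter.mem_pure.mp h2
  obtain ⟨n, hn⟩ : ∃ n : ℕ, ∀ i ∈ I, i.natAbs ≤ n := by
    classical
    refine ⟨(hIfin.toFinset.image Int.natAbs).sup id, ?_⟩
    intro i hi
    exact Finset.le_sup (f := id) (Finset.mem_image_of_mem Int.natAbs (hIfin.mem_toFinset.2 hi))
  obtain ⟨y, hy, j, hj⟩ := h n
  rw [window, List.length_ofFn] at hj
  have hfn := List.ofFn_inj.1 hj
  set z : ℤ → A := fun m => y (m + (j + n)) with hzdef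
  have hzX : z ∈ X := shift_translate hXinv (j + n) hy
  refine ⟨z, hsub ?_, hzX⟩
  intro i hi
  have hbound := hn i hi
  have hfni := congrFun hfn ⟨(i + n).toNat, by omega⟩
  simp only at hfni
  have harg1 : (-(n:ℤ) + ((i + (n:ℤ)).toNat : ℕ)) = i := by omega
  have harg2 : (j + ((i + (n:ℤ)).toNat : ℕ)) = i + (j + n) := by omega
  rw [harg1, harg2] at hfni
  show z i ∈ T i
  rw [hzdef]
  simp only
  rw [← hfni]
  exact hTx i

lemma per_mem [Fintype A] [TopologicalSpace A] [DiscreteTopology A]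
    {X : Set (ℤ → A)} (hXcl : IsClosed X) (hXinv : shift '' X = X)
    {C : Set (List A)} (hcoded : Lang X = FacStar C)
    {w : List A} (hw : w ≠ []) (hwC : InStar C w) : per w hw ∈ X := by
  apply mem_of_windows hXcl hXinv
  intro n
  rw [hcoded]
  exact ⟨_, instar_flatten_replicate hwC _, window_per_infix hw (-(n:ℤ)) (2 * n + 1)⟩

/-- rotation: the periodic point of u++v also reads v++u shifted by |u| -/
lemma per_rot {u v : List A} (hw : (u ++ v) ≠ []) (n : ℤ) :
    per (u ++ v) hw n =
      (v ++ u).getD ((n - (u.length : ℤ)) % ((v ++ u).length : ℤ)).toNat (per (u ++ v) hw n) := by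
  set W : ℕ := (u ++ v).length with hWdef
  have hWvu : (v ++ u).length = W := by simp [hWdef, List.length_append]; ring
  have hWpos : 0 < W := List.length_pos_iff.2 hw
  have hWz : ((W:ℤ)) ≠ 0 := by exact_mod_cast hWpos.ne'
  set j : ℕ := (n % (W:ℤ)).toNat with hjdef
  have hj0 : 0 ≤ n % (W:ℤ) := Int.emod_nonneg n hWz
  have hj1 : n % (W:ℤ) < W := Int.emod_lt_of_pos n (by exact_mod_cast hWpos)
  have hjW : j < W := by omega
  -- the index on the RHS
  have hidx : ((n - (u.length : ℤ)) % ((v ++ u).length : ℤ)).toNat = (j + v.length) % W := by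
    rw [hWvu]
    have e1 : (n - (u.length:ℤ)) % (W:ℤ) = (n + v.length) % (W:ℤ) := by
      have : n + (v.length:ℤ) = (n - u.length) + (W:ℤ) * 1 := by
        have : (u.length:ℤ) + v.length = W := by
          rw [hWdef]; push_cast [List.length_append]; ring
        linarith
      rw [this, Int.add_mul_emod_self_left]
    have e2 : (n + (v.length:ℤ)) % (W:ℤ) = ((j:ℤ) + v.length) % (W:ℤ) := by
      conv_lhs => rw [show n = n % (W:ℤ) + (W:ℤ) * (n / W) by rw [Int.emod_add_mul_ediv]]
      rw [show n % (W:ℤ) + (W:ℤ) * (n / W) + (v.length:ℤ)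
          = (n % (W:ℤ) + (v.length:ℤ)) + (W:ℤ) * (n / W) by ring, Int.add_mul_emod_self_left]
      congr 2
      omega
    have e3 : ((j:ℤ) + v.length) % (W:ℤ) = (((j + v.length) % W : ℕ) : ℤ) := by
      push_cast; rfl
    rw [e1, e2, e3]
    omega
  have hlt : (j + v.length) % W < (v ++ u).length := by rw [hWvu]; exact Nat.mod_lt _ hWpos
  rw [List.getD_eq_getElem _ _ (by rw [hidx]; exact hlt)]
  have lhs_eq : per (u ++ v) hw n = (u ++ v)[j]'(by omega) := rfl
  rw [lhs_eq]
  -- now a pure list fact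
  have key : (u ++ v)[j]'(by omega) = (v ++ u)[(j + v.length) % W]'hlt := by
    by_cases h : j < u.length
    · have hmod : (j + v.length) % W = j + v.length := by
        apply Nat.mod_eq_of_lt
        have : W = u.length + v.length := by simp [hWdef]
        omega
      rw [List.getElem_append_left h]
      have h2 : v.length ≤ (j + v.length) % W := by omega
      rw [List.getElem_append_right (by omega)]
      congr 1
      omega
    · push_neg at h
      have hWuv : W = u.length + v.length := by simp [hWdef]
      have hmod : (j + v.length) % W = j - u.length := by
        have : j + v.length = W + (j - u.length) := by omega
        rw [this, Nat.add_mod_left, Nat.mod_eq_of_lt (by omega)]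
      rw [List.getElem_append_right h]
      simp only [hmod]
      rw [List.getElem_append_left (by omega)]
  rw [key]
  congr 1
  omega

lemma buildFact {C : Set (List A)} (hne : ∀ c ∈ C, c ≠ [])
    (L : List (List A)) (hL : ∀ a ∈ L, a ∈ C) (hL0 : L ≠ [])
    (x : ℤ → A) (s : ℤ)
    (hx : ∀ n : ℤ, x n = (L.flatten).getD ((n - s) % ((L.flatten).length : ℤ)).toNat (x n)) :
    ∃ (c : ℤ → List A) (k : ℕ) (p : ℤ → ℤ) (m₀ : ℤ),
      (∀ n : ℤ, c n = L.getD (((n + m₀) % (L.length : ℤ)).toNat) []) ∧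
      (∀ n : ℤ, p n = s + FF L (n + m₀)) ∧
      p 0 = -(k : ℤ) ∧ (∀ n, p (n + 1) = p n + ((c n).length : ℤ)) ∧
      IsBiFactorization C x c k := by
  have hent : ∀ a ∈ L, a ≠ [] := fun a ha => hne a (hL a ha)
  have hlenN : 0 < L.length := List.length_pos_iff.2 hL0
  have hlen : (0:ℤ) < L.length := by exact_mod_cast hlenN
  have hWN : 0 < L.flatten.length := flatten_pos hL0 hent
  have hW : (0:ℤ) < L.flatten.length := by exact_mod_cast hWN
  set T : ℤ := -s with hT
  set a : ℤ := T / (L.flatten.length:ℤ) with ha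
  have ht0 : 0 ≤ T % (L.flatten.length:ℤ) := Int.emod_nonneg T hW.ne'
  have ht1 : T % (L.flatten.length:ℤ) < L.flatten.length := Int.emod_lt_of_pos T hW
  set tn : ℕ := (T % (L.flatten.length:ℤ)).toNat with htn
  have htnW : tn < L.flatten.length := by omega
  obtain ⟨r, hr, hPSr, hPSr1⟩ := find_block L L.length le_rfl tn (by rw [PS_len]; omega)
  set m₀ : ℤ := a * L.length + r with hm₀
  obtain ⟨hmod, hdiv⟩ := divmod_of (a := a) (r := (r:ℤ)) hlen (by positivity)
    (by exact_mod_cast hr)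
  have hm₀tn : ((m₀ % (L.length:ℤ)).toNat) = r := by rw [hm₀, hmod]; omega
  have hFFm₀ : FF L m₀ = a * (L.flatten.length:ℤ) + PS L r := by
    unfold FF; rw [hm₀, hdiv]; rw [← hm₀, hm₀tn]
  have hTeq : T = a * (L.flatten.length:ℤ) + tn := by
    have h1 := Int.mul_ediv_add_emod T (L.flatten.length:ℤ)
    have h2 : a * (L.flatten.length:ℤ) = (L.flatten.length:ℤ) * a := mul_comm _ _
    have h3 : (L.flatten.length:ℤ) * (T / (L.flatten.length:ℤ)) = (L.flatten.length:ℤ) * a := by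
      rw [← ha]
    omega
  have hFle : FF L m₀ ≤ T := by
    rw [hFFm₀, hTeq]
    have : (PS L r : ℤ) ≤ tn := by exact_mod_cast hPSr
    linarith
  have hsucc : FF L (m₀ + 1) = FF L m₀ + ((L.getD r []).length : ℤ) := by
    rw [FF_succ hL0 m₀, hm₀tn]
  have hTlt : T < FF L (m₀ + 1) := by
    rw [hsucc, hFFm₀, hTeq]
    have h1 : (tn:ℤ) < (PS L (r+1) : ℤ) := by exact_mod_cast hPSr1
    have h2 : (PS L (r+1) : ℤ) = (PS L r : ℤ) + (L.getD r []).length := by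
      exact_mod_cast PS_succ L hr
    linarith
  clear_value m₀
  set k : ℕ := (T - FF L m₀).toNat with hk
  have hkc : (k:ℤ) = T - FF L m₀ := by omega
  clear_value k
  set c : ℤ → List A := fun n => L.getD (((n + m₀) % (L.length : ℤ)).toNat) [] with hc
  set p : ℤ → ℤ := fun n => s + FF L (n + m₀) with hp
  clear_value c p
  have hc0 : c 0 = L.getD r [] := by
    rw [hc]; simp only [zero_add, hm₀tn]
  have cmem : ∀ n, c n ∈ C := by
    intro n
    have h0 : 0 ≤ (n + m₀) % (L.length:ℤ) := Int.emod_nonneg _ hlen.ne'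
    have h1 : (n + m₀) % (L.length:ℤ) < L.length := Int.emod_lt_of_pos _ hlen
    have hidx : ((n + m₀) % (L.length:ℤ)).toNat < L.length := by omega
    rw [hc]
    simp only
    rw [List.getD_eq_getElem L [] hidx]
    exact hL _ (List.getElem_mem hidx)
  have hklt : k < (c 0).length := by
    rw [hc0]
    have : (k:ℤ) < ((L.getD r []).length : ℤ) := by rw [hkc]; linarith [hTlt, hsucc.le]
    exact_mod_cast this
  have hp0 : p 0 = -(k:ℤ) := by
    rw [hp]
    simp only [zero_add]
    omega
  have hprec : ∀ n, p (n + 1) = p n + ((c n).length : ℤ) := by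
    intro n
    rw [hp, hc]
    simp only
    rw [show n + 1 + m₀ = (n + m₀) + 1 by ring, FF_succ hL0 (n + m₀)]
    ring
  have hcov : ∀ (n : ℤ) (i : Fin (c n).length), x (p n + (i : ℕ)) = (c n).get i := by
    intro n i
    have h0 : 0 ≤ (n + m₀) % (L.length:ℤ) := Int.emod_nonneg _ hlen.ne'
    have h1 : (n + m₀) % (L.length:ℤ) < L.length := Int.emod_lt_of_pos _ hlen
    set ρ : ℕ := ((n + m₀) % (L.length:ℤ)).toNat with hρ
    have hρl : ρ < L.length := by omega
    have hcn : c n = L.getD ρ [] := by rw [hc]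
    have hiρ : (i : ℕ) < (L.getD ρ []).length := by rw [← hcn]; exact i.isLt
    have hPSi : PS L ρ + (i:ℕ) < L.flatten.length := by
      have := PS_succ L hρl
      have := PS_le L (ρ + 1)
      omega
    rw [hx (p n + (i:ℕ))]
    have e1 : p n + (i:ℕ) - s = FF L (n + m₀) + (i:ℕ) := by rw [hp]; ring
    have e2 : FF L (n + m₀) + ((i:ℕ):ℤ) =
        ((PS L ρ + (i:ℕ) : ℕ) : ℤ) + (L.flatten.length:ℤ) * ((n + m₀) / (L.length:ℤ)) := by
      unfold FF
      rw [← hρ]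
      push_cast
      ring
    have hidx : (p n + (i:ℕ) - s) % ((L.flatten.length : ℕ) : ℤ)
        = ((PS L ρ + (i:ℕ) : ℕ) : ℤ) := by
      rw [e1, e2, Int.add_mul_emod_self_left]
      exact Int.emod_eq_of_lt (by positivity) (by exact_mod_cast hPSi)
    rw [hidx, Int.toNat_natCast, List.getD_eq_getElem _ _ hPSi,
      getElem_flatten_PS L hρl hiρ hPSi, List.get_eq_getElem]
    exact (List.getElem_of_eq hcn (i.isLt)).symm
  exact ⟨c, k, p, m₀, fun n => by rw [hc], fun n => by rw [hp], hp0, hprec,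
    cmem, hklt, p, hp0, hprec, hcov⟩

/-- if a shift space `X` is unambiguously coded by `C` (the
language of `X` is the set of factors of `C*` and every point of `X` has at
most one factorization into words of `C`), then `C` is a circular code. -/
theorem stmt4 [Fintype A] [TopologicalSpace A] [DiscreteTopology A]
    (X : Set (ℤ → A)) (hXcl : IsClosed X) (hXinv : shift '' X = X)
    (C : Set (List A)) (hne : ∀ c ∈ C, c ≠ [])
    (hcoded : Lang X = FacStar C)
    (hunamb : ∀ x ∈ X, ∀ (c c' : ℤ → List A) (k k' : ℕ),
      IsBiFactorization C x c k → IsBiFactorization C x c' k' → c = c' ∧ k = k') :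
    ∀ u v : List A, InStar C (u ++ v) → InStar C (v ++ u) →
      InStar C u ∧ InStar C v := by
  intro u v huv hvu
  by_cases hu : u = []
  · subst hu
    exact ⟨instar_nil C, by simpa using huv⟩
  by_cases hv : v = []
  · subst hv
    exact ⟨by simpa using hvu, instar_nil C⟩
  obtain ⟨L₁, hL₁C, hflat₁⟩ := huv
  obtain ⟨L₂, hL₂C, hflat₂⟩ := hvu
  have hulen : 0 < u.length := List.length_pos_iff.2 hu
  have hvlen : 0 < v.length := List.length_pos_iff.2 hv
  have hw : u ++ v ≠ [] := by simp [hu]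
  have hL₁0 : L₁ ≠ [] := by
    intro h; rw [h] at hflat₁; simp at hflat₁; exact hu hflat₁.1
  have hL₂0 : L₂ ≠ [] := by
    intro h; rw [h] at hflat₂; simp at hflat₂; exact hv hflat₂.1

  set x : ℤ → A := per (u ++ v) hw with hxdef
  have hxX : x ∈ X := per_mem hXcl hXinv hcoded hw ⟨L₁, hL₁C, hflat₁⟩
  have hWuv : 0 < (u ++ v).length := List.length_pos_iff.2 hw
  have hx₁ : ∀ n : ℤ, x n =
      (L₁.flatten).getD ((n - 0) % ((L₁.flatten).length : ℤ)).toNat (x n) := by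
    intro n
    rw [hflat₁, sub_zero]
    have h0 : 0 ≤ n % (((u ++ v).length : ℕ) : ℤ) :=
      Int.emod_nonneg n (by exact_mod_cast hWuv.ne')
    have h1 : n % (((u ++ v).length : ℕ) : ℤ) < (u ++ v).length :=
      Int.emod_lt_of_pos n (by exact_mod_cast hWuv)
    have hlt : (n % (((u ++ v).length : ℕ) : ℤ)).toNat < (u ++ v).length := by omega
    rw [List.getD_eq_getElem _ _ hlt]
    rfl
  have hx₂ : ∀ n : ℤ, x n =
      (L₂.flatten).getD ((n - (u.length : ℤ)) % ((L₂.flatten).length : ℤ)).toNat (x n) := by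
    intro n
    rw [hflat₂]
    exact per_rot hw n
  obtain ⟨c₁, k₁, p₁, m₁, hc₁, hp₁, hp₁0, hp₁rec, hfact₁⟩ :=
    buildFact hne L₁ hL₁C hL₁0 x 0 hx₁
  obtain ⟨c₂, k₂, p₂, m₂, hc₂, hp₂, hp₂0, hp₂rec, hfact₂⟩ :=
    buildFact hne L₂ hL₂C hL₂0 x (u.length) hx₂
  obtain ⟨hceq, hkeq⟩ := hunamb x hxX c₁ c₂ k₁ k₂ hfact₁ hfact₂
  have hpeq : p₁ = p₂ :=
    p_unique p₁ p₂ (fun n => ((c₁ n).length : ℤ)) (by rw [hp₁0, hp₂0, hkeq]) hp₁rec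
      (by intro n; rw [hceq]; exact hp₂rec n)
  have h1 : p₂ (-m₂) = (u.length : ℤ) := by
    rw [hp₂ (-m₂), show -m₂ + m₂ = 0 by ring, FF_zero]; ring
  have h2 : FF L₁ (-m₂ + m₁) = (u.length : ℤ) := by
    have h3 := hp₁ (-m₂)
    rw [hpeq, h1] at h3
    linarith
  have hent₁ : ∀ a ∈ L₁, a ≠ [] := fun a ha => hne a (hL₁C a ha)
  have hge : 0 ≤ FF L₁ (-m₂ + m₁) := by rw [h2]; positivity
  have hlt2 : FF L₁ (-m₂ + m₁) < ((L₁.flatten).length : ℤ) := by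
    rw [h2, hflat₁]
    have : (u ++ v).length = u.length + v.length := List.length_append
    exact_mod_cast (by omega : u.length < (u ++ v).length)
  obtain ⟨r, hrlen, hPSr⟩ := FF_mem_PS hL₁0 hent₁ _ hge hlt2
  have hPSu : PS L₁ r = u.length := by exact_mod_cast hPSr.trans h2
  have hsplit : L₁.flatten = (L₁.take r).flatten ++ (L₁.drop r).flatten := by
    rw [← List.flatten_append, List.take_append_drop]
  have hu_eq : u = (L₁.take r).flatten := by
    have h3 : (L₁.flatten).take u.length = (L₁.take r).flatten := by
      rw [hsplit]
      exact List.take_left' hPSu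
    have h4 : (L₁.flatten).take u.length = u := by
      rw [hflat₁]
      exact List.take_left' rfl
    rw [← h3, h4]
  have hv_eq : v = (L₁.drop r).flatten := by
    apply List.append_cancel_left (as := u)
    rw [← hflat₁, hsplit, ← hu_eq]
  refine ⟨⟨L₁.take r, fun a ha => hL₁C a (List.take_subset r L₁ ha), hu_eq.symm⟩,
    ⟨L₁.drop r, fun a ha => hL₁C a (List.drop_subset r L₁ ha), hv_eq.symm⟩⟩
end

section
/- Let 𝒜 be a finite unambiguous automaton with state set Q. Then 𝒜 is strongly unambiguous if and only if every strongly connected component of the non-diagonal part of the product automaton 𝒜 × 𝒜 is trivial (contains no edge, equivalently no cycle passes through a non-diagonal state). -/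
variable {Q A : Type*}

/-- A finite path in the automaton with edge relation `E`, given as a list of
consecutive edges `(source, label, target)`. -/
def ValidPath (E : Q → A → Q → Prop) (l : List (Q × A × Q)) : Prop :=
  (∀ e ∈ l, E e.1 e.2.1 e.2.2) ∧ l.Chain' (fun e f => e.2.2 = f.1)

/-- The automaton is unambiguous: for every word and every pair of states,
there is at most one path with that label from the first state to the second. -/
def Unambiguous (E : Q → A → Q → Prop) : Prop :=
  ∀ l l' : List (Q × A × Q), ValidPath E l → ValidPath E l' →
    l.map (fun e => e.2.1) = l'.map (fun e => e.2.1) →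
    ∀ (h : l ≠ []) (h' : l' ≠ []),
      (l.head h).1 = (l'.head h').1 →
      (l.getLast h).2.2 = (l'.getLast h').2.2 → l = l'

/-- A bi-infinite path in the automaton with edge relation `E`. -/
def BiPath (E : Q → A → Q → Prop) (z : ℤ → Q × A × Q) : Prop :=
  ∀ n : ℤ, E (z n).1 (z n).2.1 (z n).2.2 ∧ (z n).2.2 = (z (n + 1)).1

/-- The automaton is strongly unambiguous: the labelling of bi-infinite paths
is injective. -/
def StronglyUnambiguous (E : Q → A → Q → Prop) : Prop :=
  ∀ z z' : ℤ → Q × A × Q, BiPath E z → BiPath E z' →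
    (∀ n, (z n).2.1 = (z' n).2.1) → z = z'

/-- The non-diagonal part of the square automaton `𝒜 × 𝒜`. -/
def SquareND (E : Q → A → Q → Prop) : Q × Q → A → Q × Q → Prop :=
  fun p a r => p.1 ≠ p.2 ∧ r.1 ≠ r.2 ∧ E p.1 a r.1 ∧ E p.2 a r.2

private lemma emod_toNat_lt (n : ℤ) {k : ℕ} (hk : 0 < k) : (n % (k : ℤ)).toNat < k := by
  have h1 : n % (k : ℤ) < k := Int.emod_lt_of_pos n (by exact_mod_cast hk)
  have h0 : (0 : ℤ) ≤ n % k := Int.emod_nonneg n (by exact_mod_cast hk.ne')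
  omega

private lemma emod_toNat_succ (n : ℤ) {k : ℕ} (hk : 0 < k) :
    ((n + 1) % (k : ℤ)).toNat = ((n % (k : ℤ)).toNat + 1) % k := by
  have h0 : (0 : ℤ) ≤ n % k := Int.emod_nonneg n (by exact_mod_cast hk.ne')
  have hdiv : n % (k : ℤ) + (k : ℤ) * (n / k) = n := Int.emod_add_mul_ediv n k
  have h1 : (n + 1) % (k : ℤ) = ((n % (k : ℤ) + 1) + (k : ℤ) * (n / k)) % k := by
    congr 1; linarith
  have h2 : ((n % (k : ℤ) + 1) + (k : ℤ) * (n / k)) % (k : ℤ) = (n % (k : ℤ) + 1) % k :=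
    Int.add_mul_emod_self_left ..
  have h3 : n % (k : ℤ) + 1 = (((n % (k : ℤ)).toNat + 1 : ℕ) : ℤ) := by
    push_cast; omega
  rw [h1, h2, h3, ← Int.natCast_emod, Int.toNat_natCast]

/-- From a nonempty cycle in the non-diagonal square, not strongly unambiguous. -/
private lemma not_su_of_cycle (E : Q → A → Q → Prop)
    (l : List ((Q × Q) × A × (Q × Q))) (hne : l ≠ [])
    (hvp : ValidPath (SquareND E) l)
    (hcyc : (l.getLast hne).2.2 = (l.head hne).1) :
    ¬ StronglyUnambiguous E := by
  intro hSU
  have hk : 0 < l.length := List.length_pos_iff.2 hne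
  set e : ℤ → ((Q × Q) × A × (Q × Q)) :=
    fun n => l.get ⟨(n % (l.length : ℤ)).toNat, emod_toNat_lt n hk⟩ with he
  have hSq : ∀ n, SquareND E (e n).1 (e n).2.1 (e n).2.2 := fun n => hvp.1 _ (l.get_mem _)
  have hglue : ∀ n : ℤ, (e n).2.2 = (e (n + 1)).1 := by
    intro n
    have hr := emod_toNat_succ n hk
    by_cases hcase : (n % (l.length : ℤ)).toNat + 1 < l.length
    · have hchain := List.isChain_iff_getElem.1 hvp.2 ((n % (l.length : ℤ)).toNat) (by omega)
      have hidx : ((n + 1) % (l.length : ℤ)).toNat = (n % (l.length : ℤ)).toNat + 1 := by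
        rw [hr, Nat.mod_eq_of_lt hcase]
      have : e (n + 1) = l.get ⟨(n % (l.length : ℤ)).toNat + 1, hcase⟩ := by
        simp only [he, List.get_eq_getElem, hidx]
      rw [this]; exact hchain
    · have hlt := emod_toNat_lt n hk
      have hlast : (n % (l.length : ℤ)).toNat = l.length - 1 := by omega
      have hidx : ((n + 1) % (l.length : ℤ)).toNat = 0 := by
        rw [hr, hlast, Nat.sub_add_cancel hk, Nat.mod_self]
      have h1 : e n = l.getLast hne := by
        rw [List.getLast_eq_getElem]
        simp only [he, List.get_eq_getElem, hlast]
      have h2 : e (n + 1) = l.head hne := by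
        rw [List.head_eq_getElem]
        simp only [he, List.get_eq_getElem, hidx]
      rw [h1, h2, hcyc]
  set z : ℤ → Q × A × Q := fun n => ((e n).1.1, (e n).2.1, (e n).2.2.1) with hz
  set z' : ℤ → Q × A × Q := fun n => ((e n).1.2, (e n).2.1, (e n).2.2.2) with hz'
  have hb : BiPath E z := fun n => ⟨(hSq n).2.2.1, congrArg (fun p => p.1) (hglue n)⟩
  have hb' : BiPath E z' := fun n => ⟨(hSq n).2.2.2, congrArg (fun p => p.2) (hglue n)⟩
  have heq := hSU z z' hb hb' (fun n => rfl)
  have h0 : (e 0).1.1 ≠ (e 0).1.2 := (hSq 0).1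
  exact h0 (congrArg (fun f => (f 0).1) heq)

private lemma validPath_segment (E : Q → A → Q → Prop) {z : ℤ → Q × A × Q}
    (hz : BiPath E z) (m : ℤ) (len : ℕ) :
    ValidPath E ((List.range len).map (fun i : ℕ => z (m + (i : ℤ)))) := by
  constructor
  · intro e hemem
    simp only [List.mem_map, List.mem_range] at hemem
    obtain ⟨i, -, rfl⟩ := hemem
    exact (hz _).1
  · rw [List.Chain', List.isChain_iff_getElem]
    intro i hi
    simp only [List.get_eq_getElem, List.getElem_map, List.getElem_range]
    have harith : (m + ((i + 1 : ℕ) : ℤ)) = (m + i) + 1 := by push_cast; ring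
    rw [harith]
    exact (hz _).2

private lemma segment_head {α : Type*} (f : ℤ → α) (m : ℤ) {len : ℕ} (_h : 0 < len)
    (hne : (List.range len).map (fun i : ℕ => f (m + (i : ℤ))) ≠ []) :
    ((List.range len).map (fun i : ℕ => f (m + (i : ℤ)))).head hne = f m := by
  rw [List.head_eq_getElem]
  simp [List.getElem_map, List.getElem_range]

private lemma segment_getLast {α : Type*} (f : ℤ → α) (m : ℤ) {len : ℕ} (_h : 0 < len)
    (hne : (List.range len).map (fun i : ℕ => f (m + (i : ℤ))) ≠ []) :
    ((List.range len).map (fun i : ℕ => f (m + (i : ℤ)))).getLast hne = f (m + (len - 1 : ℕ)) := by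
  rw [List.getLast_eq_getElem]
  simp [List.getElem_map, List.getElem_range]

/-- From two bi-infinite paths with equal labels whose source-pairs are distinct on an
interval and repeat at its endpoints, produce a cycle in the nondiagonal square. -/
private lemma cycle_of_pair (E : Q → A → Q → Prop)
    {z z' : ℤ → Q × A × Q} (hz : BiPath E z) (hz' : BiPath E z')
    (hlab : ∀ n, (z n).2.1 = (z' n).2.1)
    {n1 n2 : ℤ} (hlt : n1 < n2)
    (hD : ∀ n, n1 ≤ n → n ≤ n2 → (z n).1 ≠ (z' n).1)
    (he1 : (z n1).1 = (z n2).1) (he2 : (z' n1).1 = (z' n2).1) :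
    ∃ (L : List ((Q × Q) × A × (Q × Q))) (h : L ≠ []),
      ValidPath (SquareND E) L ∧ (L.getLast h).2.2 = (L.head h).1 := by
  set len := (n2 - n1).toNat with hlendef
  have hlen : (len : ℤ) = n2 - n1 := by omega
  have hlenpos : 0 < len := by omega
  set f : ℤ → ((Q × Q) × A × (Q × Q)) := fun n =>
    (((z n).1, (z' n).1), (z n).2.1, ((z (n + 1)).1, (z' (n + 1)).1)) with hf
  have hfSq : ∀ n, n1 ≤ n → n + 1 ≤ n2 → SquareND E (f n).1 (f n).2.1 (f n).2.2 := by
    intro n hn1 hn2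
    refine ⟨hD n hn1 (by omega), hD (n + 1) (by omega) hn2, ?_, ?_⟩
    · have := (hz n).1; rwa [(hz n).2] at this
    · have := (hz' n).1; rwa [(hz' n).2, ← hlab n] at this
  have hne : (List.range len).map (fun i : ℕ => f (n1 + (i : ℤ))) ≠ [] := by
    simp [hlenpos.ne']
  refine ⟨(List.range len).map (fun i : ℕ => f (n1 + (i : ℤ))), hne, ⟨?_, ?_⟩, ?_⟩
  · intro e hemem
    simp only [List.mem_map, List.mem_range] at hemem
    obtain ⟨i, hi, rfl⟩ := hemem
    exact hfSq (n1 + i) (by omega) (by omega)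
  · rw [List.Chain', List.isChain_iff_getElem]
    intro i hi
    simp only [List.get_eq_getElem, List.getElem_map, List.getElem_range]
    have harith : (n1 + ((i + 1 : ℕ) : ℤ)) = (n1 + i) + 1 := by push_cast; ring
    rw [harith]
  · rw [segment_head f n1 hlenpos, segment_getLast f n1 hlenpos]
    have harith : n1 + ((len - 1 : ℕ) : ℤ) + 1 = n2 := by omega
    rw [hf]
    simp only
    rw [harith, ← he1, ← he2]


/-- a finite unambiguous automaton is strongly unambiguous iff
every strongly connected component of the non-diagonal part of its square is
trivial, i.e. iff the non-diagonal part of the square carries no nonempty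
cycle. -/
theorem stmt8 [Fintype Q] [Fintype A] (E : Q → A → Q → Prop)
    (hU : Unambiguous E) :
    StronglyUnambiguous E ↔
      ¬ ∃ (l : List ((Q × Q) × A × (Q × Q))) (h : l ≠ []),
          ValidPath (SquareND E) l ∧ (l.getLast h).2.2 = (l.head h).1 := by
  constructor
  · rintro hSU ⟨l, hne, hvp, hcyc⟩
    exact not_su_of_cycle E l hne hvp hcyc hSU
  · intro hNC z z' hz hz' hlab
    by_contra hzne
    -- there is a position where the sources differ
    have hsrc : ∃ n, (z n).1 ≠ (z' n).1 := by
      by_contra h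
      push_neg at h
      apply hzne
      funext n
      have h2 : (z n).2.2 = (z' n).2.2 := by rw [(hz n).2, (hz' n).2, h]
      exact Prod.ext (h n) (Prod.ext (hlab n) h2)
    obtain ⟨n0, hn0⟩ := hsrc
    by_cases hLeft : ∃ m, m ≤ n0 ∧ (z m).1 = (z' m).1
    · by_cases hRight : ∃ n, n0 ≤ n ∧ (z n).1 = (z' n).1
      · -- unambiguity gives a contradiction
        obtain ⟨m, hm, hmeq⟩ := hLeft
        obtain ⟨n, hn, hneq⟩ := hRight
        have hmn0 : m ≠ n0 := fun h => hn0 (h ▸ hmeq)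
        have hnn0 : n ≠ n0 := fun h => hn0 (h ▸ hneq)
        have hmlt : m < n0 := lt_of_le_of_ne hm hmn0
        have hnlt : n0 < n := lt_of_le_of_ne hn (Ne.symm hnn0)
        set len := (n - m).toNat with hlendef
        have hlen : (len : ℤ) = n - m := by omega
        have hlenpos : 0 < len := by omega
        set L := (List.range len).map (fun i : ℕ => z (m + (i : ℤ))) with hL
        set L' := (List.range len).map (fun i : ℕ => z' (m + (i : ℤ))) with hL'
        have hLne : L ≠ [] := by simp [hL, hlenpos.ne']
        have hL'ne : L' ≠ [] := by simp [hL', hlenpos.ne']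
        have hlabels : L.map (fun e => e.2.1) = L'.map (fun e => e.2.1) := by
          rw [hL, hL', List.map_map, List.map_map]
          exact List.map_congr_left (fun a _ => hlab (m + a))
        have hhead : (L.head hLne).1 = (L'.head hL'ne).1 := by
          rw [hL, hL'] at *
          rw [segment_head z m hlenpos, segment_head z' m hlenpos]
          exact hmeq
        have hlast : (L.getLast hLne).2.2 = (L'.getLast hL'ne).2.2 := by
          rw [hL, hL'] at *
          rw [segment_getLast z m hlenpos, segment_getLast z' m hlenpos]
          have harith : m + ((len - 1 : ℕ) : ℤ) + 1 = n := by omega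
          rw [(hz _).2, (hz' _).2, harith, hneq]
        have hLL := hU L L' (validPath_segment E hz m len) (validPath_segment E hz' m len)
          hlabels hLne hL'ne hhead hlast
        -- extract equality at position n0
        have hi0 : (n0 - m).toNat < len := by omega
        have hget : L[(n0 - m).toNat]'(by simp [hL, hi0]) =
            L'[(n0 - m).toNat]'(by simp [hL', hi0]) := List.getElem_of_eq hLL _
        simp only [hL, hL', List.getElem_map, List.getElem_range] at hget
        have harith : m + ((n0 - m).toNat : ℤ) = n0 := by omega
        rw [harith] at hget
        exact hn0 (congrArg Prod.fst hget)
      · -- all n ≥ n0 have distinct sources: pigeonhole to the right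
        push_neg at hRight
        set g : Fin (Fintype.card (Q × Q) + 1) → Q × Q :=
          fun i => ((z (n0 + i)).1, (z' (n0 + i)).1) with hg
        obtain ⟨i, j, hij, hgij⟩ := Fintype.exists_ne_map_eq_of_card_lt g (by simp)
        rcases hij.lt_or_gt with hlt | hlt
        · exact hNC (cycle_of_pair E hz hz' hlab (show n0 + ((i : ℕ) : ℤ) < n0 + ((j : ℕ) : ℤ) by
              have : ((i : ℕ) : ℤ) < (j : ℕ) := by exact_mod_cast hlt
              omega)
            (fun n hn1 hn2 => hRight n (by omega))
            (Prod.ext_iff.1 hgij).1 (Prod.ext_iff.1 hgij).2)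
        · exact hNC (cycle_of_pair E hz hz' hlab (show n0 + ((j : ℕ) : ℤ) < n0 + ((i : ℕ) : ℤ) by
              have : ((j : ℕ) : ℤ) < (i : ℕ) := by exact_mod_cast hlt
              omega)
            (fun n hn1 hn2 => hRight n (by omega))
            (Prod.ext_iff.1 hgij.symm).1 (Prod.ext_iff.1 hgij.symm).2)
    · -- all m ≤ n0 have distinct sources: pigeonhole to the left
      push_neg at hLeft
      set g : Fin (Fintype.card (Q × Q) + 1) → Q × Q :=
        fun i => ((z (n0 - i)).1, (z' (n0 - i)).1) with hg
      obtain ⟨i, j, hij, hgij⟩ := Fintype.exists_ne_map_eq_of_card_lt g (by simp)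
      rcases hij.lt_or_gt with hlt | hlt
      · exact hNC (cycle_of_pair E hz hz' hlab (show n0 - (j:ℤ) < n0 - (i:ℤ) by
            have : (i:ℤ) < j := by exact_mod_cast hlt
            omega)
          (fun n hn1 hn2 => hLeft n (by omega))
          (Prod.ext_iff.1 hgij.symm).1 (Prod.ext_iff.1 hgij.symm).2)
      · exact hNC (cycle_of_pair E hz hz' hlab (show n0 - (i:ℤ) < n0 - (j:ℤ) by
            have : (j:ℤ) < i := by exact_mod_cast hlt
            omega)
          (fun n hn1 hn2 => hLeft n (by omega))
          (Prod.ext_iff.1 hgij).1 (Prod.ext_iff.1 hgij).2)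
end

section
/- Let L ⊆ A* be factorial. A word w is a constant for L if and only if for all u, v ∈ A*, uw ∈ L and wv ∈ L imply uwv ∈ L. -/
/-- if `L` is factorial, then a word `w` (which is a factor of
some element of `L`) is a constant for `L` iff for all `u, v`, `uw ∈ L` and
`wv ∈ L` imply `uwv ∈ L`. -/
theorem stmt10 {A : Type*} [Fintype A] (L : Set (List A))
    (hfact : ∀ u ∈ L, ∀ v : List A, v <:+: u → v ∈ L)
    (w : List A) (hw : ∃ z ∈ L, w <:+: z) :
    (∀ u v u' v' : List A, u ++ w ++ v ∈ L → u' ++ w ++ v' ∈ L →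
        u ++ w ++ v' ∈ L ∧ u' ++ w ++ v ∈ L) ↔
    (∀ u v : List A, u ++ w ∈ L → w ++ v ∈ L → u ++ w ++ v ∈ L) := by
  constructor
  · intro h u v hu hv
    have := h u [] [] v (by simpa using hu) (by simpa using hv)
    exact this.1
  · intro h u v u' v' hu hv
    have huw : u ++ w ∈ L := hfact _ hu _ ⟨[], v, by simp⟩
    have hu'w : u' ++ w ∈ L := hfact _ hv _ ⟨[], v', by simp⟩
    have hwv : w ++ v ∈ L := hfact _ hu _ ⟨u, [], by simp⟩
    have hwv' : w ++ v' ∈ L := hfact _ hv _ ⟨u', [], by simp⟩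
    exact ⟨h u v' huw hwv', h u' v hu'w hwv⟩
end

section
/- Let C be a prefix code. A word w ∈ C* is synchronizing for C if and only if w is a constant for the language C*. -/
variable {A : Type*}

/-- `C` is a prefix code: no element of `C` is a proper prefix of another. -/
def IsPrefixCode (C : Set (List A)) : Prop :=
  ∀ c ∈ C, ∀ c' ∈ C, c <+: c' → c = c'

lemma instar_cancel {C : Set (List A)} (hpc : IsPrefixCode C)
    (hne : ∀ c ∈ C, c ≠ []) :
    ∀ l : List (List A), (∀ u ∈ l, u ∈ C) → ∀ v, InStar C (l.flatten ++ v) → InStar C v := by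
  intro l
  induction l with
  | nil => intro _ v h; simpa using h
  | cons c l ih =>
    intro hl v h
    have hc : c ∈ C := hl _ List.mem_cons_self
    obtain ⟨m, hm, hmf⟩ := h
    cases m with
    | nil =>
      exfalso
      simp only [List.flatten_nil] at hmf
      have : c = [] := by
        have := hmf.symm
        simp only [List.flatten_cons, List.append_assoc] at this
        exact List.append_eq_nil_iff.mp this |>.1
      exact hne c hc this
    | cons c' m' =>
      have hc' : c' ∈ C := hm _ List.mem_cons_self
      have heq : c' ++ m'.flatten = c ++ (l.flatten ++ v) := by
        simpa [List.append_assoc] using hmf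
      have h1 : c <+: c' ++ m'.flatten := heq ▸ List.prefix_append _ _
      have h2 : c' <+: c' ++ m'.flatten := List.prefix_append _ _
      have hcc : c = c' := by
        rcases List.prefix_or_prefix_of_prefix h1 h2 with h | h
        · exact hpc c hc c' hc' h
        · exact (hpc c' hc' c hc h).symm
      subst hcc
      have hrest : m'.flatten = l.flatten ++ v := List.append_cancel_left heq
      exact ih (fun u hu => hl u (List.mem_cons_of_mem _ hu)) v
        ⟨m', fun u hu => hm u (List.mem_cons_of_mem _ hu), hrest⟩

/-- for a prefix code `C` and `w ∈ C*`, `w` is synchronizing for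
`C` iff `w` is a constant for the language `C*`. -/
theorem stmt11 [Fintype A] (C : Set (List A)) (hpc : IsPrefixCode C)
    (hne : ∀ c ∈ C, c ≠ []) (w : List A) (hw : InStar C w) :
    (∀ u v : List A, InStar C (u ++ w ++ v) →
        InStar C (u ++ w) ∧ InStar C v) ↔
    (∀ u v u' v' : List A, InStar C (u ++ w ++ v) → InStar C (u' ++ w ++ v') →
        InStar C (u ++ w ++ v') ∧ InStar C (u' ++ w ++ v)) := by
  constructor
  · intro hs u v u' v' h h'
    obtain ⟨huw, hv⟩ := hs u v h
    obtain ⟨hu'w, hv'⟩ := hs u' v' h'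
    exact ⟨instar_append huw hv', instar_append hu'w hv⟩
  · intro hc u v h
    have hw0 : InStar C ([] ++ w ++ []) := by simpa using hw
    obtain ⟨h1, h2⟩ := hc u v [] [] h hw0
    refine ⟨by simpa using h1, ?_⟩
    obtain ⟨lw, hlw, hlwf⟩ := hw
    have h2' : InStar C (lw.flatten ++ v) := by
      simpa [hlwf] using h2
    exact instar_cancel hpc hne lw hlw v h2'
end

section
/- Let C be a very thin prefix code (there exists w ∈ C* that is not a factor of any element of C) coding a shift X, and let 𝒜 = (Q, i, i) be the minimal automaton of C*. Then for such a word w, the set I(w) = {q ∈ Q : p·w = q for some p ∈ Q} is finite; in fact I(w) is contained in {i·s : s is a suffix of w}. -/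
variable {A : Type*}

/-- The left quotient `u⁻¹(C*)`, i.e. the state `i·u` of the minimal automaton
of `C*` reached from the initial state by reading `u`. -/
def leftQuot (C : Set (List A)) (u : List A) : Set (List A) :=
  {v | InStar C (u ++ v)}

lemma instar_append_s17 {C : Set (List A)} {x y : List A}
    (hx : InStar C x) (hy : InStar C y) : InStar C (x ++ y) := by
  obtain ⟨l1, h1, e1⟩ := hx
  obtain ⟨l2, h2, e2⟩ := hy
  refine ⟨l1 ++ l2, ?_, by simp [e1, e2]⟩
  intro u hu
  rcases List.mem_append.1 hu with h | h
  exacts [h1 u h, h2 u h]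

lemma cons_cancel {C : Set (List A)} (hpc : IsPrefixCode C)
    (hne : ∀ c ∈ C, c ≠ []) {c y : List A}
    (hc : c ∈ C) (hcy : InStar C (c ++ y)) : InStar C y := by
  obtain ⟨l, hl, he⟩ := hcy
  cases l with
  | nil =>
    exfalso
    simp only [List.flatten_nil] at he
    exact hne c hc (List.append_eq_nil_iff.1 he.symm).1
  | cons c₁ t =>
    have h1 : c₁ <+: c ++ y := ⟨t.flatten, by simpa using he⟩
    have h2 : c <+: c ++ y := ⟨y, rfl⟩
    have hcc : c = c₁ := by
      rcases List.prefix_or_prefix_of_prefix h1 h2 with h | h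
      · exact (hpc c₁ (hl c₁ (by simp)) c hc h).symm
      · exact hpc c hc c₁ (hl c₁ (by simp)) h
    subst hcc
    refine ⟨t, fun u hu => hl u (by simp [hu]), ?_⟩
    have he' : c ++ t.flatten = c ++ y := by simpa using he
    exact List.append_cancel_left he'

lemma star_cancel {C : Set (List A)} (hpc : IsPrefixCode C)
    (hne : ∀ c ∈ C, c ≠ []) {x y : List A}
    (hx : InStar C x) (hxy : InStar C (x ++ y)) : InStar C y := by
  obtain ⟨l, hl, he⟩ := hx
  subst he
  induction l with
  | nil => simpa using hxy
  | cons c t ih =>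
    have h1 : InStar C (c ++ (t.flatten ++ y)) := by
      simpa [List.append_assoc] using hxy
    exact ih (fun u hu => hl u (by simp [hu]))
      (cons_cancel hpc hne (hl c (by simp)) h1)

lemma leftQuot_star_append {C : Set (List A)} (hpc : IsPrefixCode C)
    (hne : ∀ c ∈ C, c ≠ []) {x s : List A} (hx : InStar C x) :
    leftQuot C (x ++ s) = leftQuot C s := by
  ext v
  simp only [leftQuot, Set.mem_setOf_eq]
  constructor
  · intro h
    exact star_cancel hpc hne hx (by simpa [List.append_assoc] using h)
  · intro h
    simpa [List.append_assoc] using instar_append_s17 hx h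

lemma boundary {C : Set (List A)} (hpc : IsPrefixCode C)
    {w : List A} (hthin : ∀ c ∈ C, ¬ w <:+: c) :
    ∀ l : List (List A), (∀ c ∈ l, c ∈ C) → ∀ u : List A,
      (u ++ w) <+: l.flatten →
      ∃ x s : List A, InStar C x ∧ s <:+ w ∧ x ++ s = u ++ w := by
  intro l
  induction l with
  | nil =>
    intro _ u h
    have h0 : u ++ w = [] := List.prefix_nil.1 (by simpa using h)
    obtain ⟨hu, hw⟩ := List.append_eq_nil_iff.1 h0
    exact ⟨[], [], ⟨[], by simp, rfl⟩, by simp [hw], by simp [hu, hw]⟩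
  | cons c t ih =>
    intro hl u h
    have hcl : c ∈ C := hl c (by simp)
    have hcp : c <+: c ++ t.flatten := ⟨t.flatten, rfl⟩
    have h' : u ++ w <+: c ++ t.flatten := by simpa using h
    rcases List.prefix_or_prefix_of_prefix h' hcp with hcase | hcase
    · -- u ++ w <+: c : contradiction, w is a factor of c
      exact absurd (((List.suffix_append u w).isInfix).trans hcase.isInfix)
        (hthin c hcl)
    · -- c <+: u ++ w
      by_cases hlen : c.length ≤ u.length
      · -- c <+: u, recurse
        have hcu : c <+: u :=
          List.prefix_of_prefix_length_le hcase (u.prefix_append w) hlen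
        obtain ⟨u', rfl⟩ := hcu
        have ht : u' ++ w <+: t.flatten := by
          have := h'
          rw [List.append_assoc] at this
          exact (List.prefix_append_right_inj c).1 this
        obtain ⟨x, s, hx, hs, hxs⟩ := ih (fun d hd => hl d (by simp [hd])) u' ht
        refine ⟨c ++ x, s, instar_append_s17 ⟨[c], by simp [hcl], by simp⟩ hx, hs, ?_⟩
        rw [List.append_assoc, hxs, List.append_assoc]
      · -- boundary inside w
        push_neg at hlen
        have huc : u <+: c :=
          List.prefix_of_prefix_length_le (u.prefix_append w) hcase (le_of_lt hlen)
        obtain ⟨t₀, rfl⟩ := huc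
        obtain ⟨r, hr⟩ := hcase
        have hw' : w = t₀ ++ r := by
          rw [List.append_assoc] at hr
          have := List.append_cancel_left hr
          exact this.symm ▸ rfl
        refine ⟨u ++ t₀, r, ⟨[u ++ t₀], by simp [hcl], by simp⟩, ?_, ?_⟩
        · rw [hw']; exact List.suffix_append t₀ r
        · rw [List.append_assoc, ← hw']

/-- if `C` is a very thin prefix code, witnessed by `w ∈ C*`
which is not a factor of any element of `C`, then in the minimal automaton of
`C*` the set `I(w)` of states reachable by reading `w` is contained in
`{i·s : s suffix of w}`, and in particular is finite. -/
theorem stmt17 [Fintype A] (C : Set (List A)) (hpc : IsPrefixCode C)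
    (hne : ∀ c ∈ C, c ≠ []) (w : List A) (hw : InStar C w)
    (hthin : ∀ c ∈ C, ¬ w <:+: c) :
    {S : Set (List A) | ∃ u : List A, S = leftQuot C (u ++ w) ∧ S.Nonempty} ⊆
      {S : Set (List A) | ∃ s : List A, s <:+ w ∧ S = leftQuot C s} ∧
    Set.Finite
      {S : Set (List A) | ∃ u : List A, S = leftQuot C (u ++ w) ∧ S.Nonempty} := by
  have hsub : {S : Set (List A) | ∃ u : List A, S = leftQuot C (u ++ w) ∧ S.Nonempty} ⊆
      {S : Set (List A) | ∃ s : List A, s <:+ w ∧ S = leftQuot C s} := by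
    intro S hS
    obtain ⟨u, hSu, hSne⟩ := hS
    obtain ⟨v, hv⟩ := hSne
    rw [hSu] at hv
    obtain ⟨l, hl, he⟩ := hv
    have hpre : u ++ w <+: l.flatten := ⟨v, he.symm⟩
    obtain ⟨x, s, hx, hs, hxs⟩ := boundary hpc hthin l hl u hpre
    refine ⟨s, hs, ?_⟩
    rw [hSu, ← hxs, leftQuot_star_append hpc hne hx]
  refine ⟨hsub, ?_⟩
  have hfin : ({s : List A | s <:+ w}).Finite := by
    apply Set.Finite.subset (w.tails.finite_toSet)
    intro s hs
    simpa [List.mem_tails] using hs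
  apply Set.Finite.subset (hfin.image (fun s => leftQuot C s))
  intro S hS
  obtain ⟨s, hs, hSs⟩ := hsub hS
  exact ⟨s, hs, hSs.symm⟩
end
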